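/- For integers $l \ge 2$, $N \ge 2$ and $v = l/(l-1)$, there exist constants $c_1, c_2 > 0$ depending only on $l$ such that $c_1 N^l \ln N \le \sum_{k=1}^{N-1} \left( \frac{N^v - k^v}{(k+1)^v - k^v} \right)^{l-1} \le c_2 N^l \ln N$. -/

import Mathlib

open Finset

private lemma bern_lower {v x : ℝ} (hv : 1 ≤ v) (hx : 1 ≤ x) :
    v * x ^ (v - 1) ≤ (x + 1) ^ v - x ^ v := by
  have hx0 : (0:ℝ) < x := lt_of_lt_of_le one_pos hx
  have h1 : (1:ℝ) + v * (1 / x) ≤ (1 + 1 / x) ^ v :=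
    one_add_mul_self_le_rpow_one_add
      (by have : (0:ℝ) ≤ 1 / x := by positivity
          linarith) hv
  have h2 : x ^ v * (1 + v * (1 / x)) ≤ x ^ v * (1 + 1 / x) ^ v :=
    mul_le_mul_of_nonneg_left h1 (Real.rpow_nonneg hx0.le v)
  have h3 : x ^ v * (1 + 1 / x) ^ v = (x + 1) ^ v := by
    rw [← Real.mul_rpow hx0.le (by positivity)]
    congr 1
    field_simp
  have h4 : x ^ v * (1 + v * (1 / x)) = x ^ v + v * (x ^ v / x) := by ring
  have h5 : x ^ v / x = x ^ (v - 1) := by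
    rw [Real.rpow_sub hx0, Real.rpow_one]
  rw [h3, h4, h5] at h2
  linarith

private lemma bern_upper {v x : ℝ} (hv : 1 ≤ v) (hx : 0 ≤ x) :
    (x + 1) ^ v - x ^ v ≤ v * (x + 1) ^ (v - 1) := by
  set y := x + 1 with hy
  have hy1 : (1:ℝ) ≤ y := by rw [hy]; linarith
  have hy0 : (0:ℝ) < y := lt_of_lt_of_le one_pos hy1
  have hs : (-1:ℝ) ≤ -(1 / y) := by
    have : 1 / y ≤ 1 := div_le_one_of_le₀ hy1 hy0.le
    linarith
  have h1 : (1:ℝ) + v * (-(1 / y)) ≤ (1 + -(1 / y)) ^ v :=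
    one_add_mul_self_le_rpow_one_add hs hv
  have h2 : y ^ v * (1 + v * (-(1 / y))) ≤ y ^ v * (1 + -(1 / y)) ^ v :=
    mul_le_mul_of_nonneg_left h1 (Real.rpow_nonneg hy0.le v)
  have hnn : (0:ℝ) ≤ 1 + -(1 / y) := by
    have : 1 / y ≤ 1 := div_le_one_of_le₀ hy1 hy0.le
    linarith
  have h3 : y ^ v * (1 + -(1 / y)) ^ v = x ^ v := by
    rw [← Real.mul_rpow hy0.le hnn]
    congr 1
    field_simp
    ring
  have h4 : y ^ v * (1 + v * (-(1 / y))) = y ^ v - v * (y ^ v / y) := by ring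
  have h5 : y ^ v / y = y ^ (v - 1) := by
    rw [Real.rpow_sub hy0, Real.rpow_one]
  rw [h3, h4, h5] at h2
  linarith

theorem cell_count_critical (l : ℕ) (hl : 2 ≤ l) :
    ∃ c₁ c₂ : ℝ, 0 < c₁ ∧ 0 < c₂ ∧ ∀ N : ℕ, 2 ≤ N →
      c₁ * (N : ℝ) ^ l * Real.log N ≤
        ∑ k ∈ Finset.Icc 1 (N - 1),
          (((N : ℝ) ^ ((l : ℝ) / (l - 1)) - (k : ℝ) ^ ((l : ℝ) / (l - 1))) /
            ((k + 1 : ℝ) ^ ((l : ℝ) / (l - 1)) - (k : ℝ) ^ ((l : ℝ) / (l - 1)))) ^ (l - 1) ∧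
      ∑ k ∈ Finset.Icc 1 (N - 1),
          (((N : ℝ) ^ ((l : ℝ) / (l - 1)) - (k : ℝ) ^ ((l : ℝ) / (l - 1))) /
            ((k + 1 : ℝ) ^ ((l : ℝ) / (l - 1)) - (k : ℝ) ^ ((l : ℝ) / (l - 1)))) ^ (l - 1)
        ≤ c₂ * (N : ℝ) ^ l * Real.log N := by
  have hl1 : (1:ℝ) ≤ (l:ℝ) - 1 := by
    have : (2:ℝ) ≤ (l:ℝ) := by exact_mod_cast hl
    linarith
  set v : ℝ := (l : ℝ) / ((l:ℝ) - 1) with hv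
  have hv1 : 1 ≤ v := by
    rw [hv, le_div_iff₀ (by linarith)]
    linarith
  have hv2 : v ≤ 2 := by
    rw [hv, div_le_iff₀ (by linarith)]
    linarith
  have hvl : v * ((l:ℝ) - 1) = (l:ℝ) := by
    rw [hv]; field_simp
  have hvm1 : (v - 1) * ((l:ℝ) - 1) = 1 := by
    rw [hv]; field_simp; ring
  have hcastl : ((l - 1 : ℕ) : ℝ) = (l:ℝ) - 1 := by
    have h1l : 1 ≤ l := by omega
    push_cast [h1l]; ring
  have pow_v : ∀ x : ℝ, 0 ≤ x → (x ^ v) ^ (l - 1) = x ^ l := by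
    intro x hx
    rw [← Real.rpow_natCast (x ^ v) (l - 1), ← Real.rpow_mul hx, hcastl, hvl,
      Real.rpow_natCast]
  have pow_vm1 : ∀ x : ℝ, 0 ≤ x → (x ^ (v - 1)) ^ (l - 1) = x := by
    intro x hx
    rw [← Real.rpow_natCast (x ^ (v - 1)) (l - 1), ← Real.rpow_mul hx, hcastl, hvm1,
      Real.rpow_one]
  refine ⟨1 / (2 * 8 ^ (l - 1)), 3, by positivity, by norm_num, ?_⟩
  intro N hN
  have hN1 : 1 ≤ N := by omega
  have hNR : (2:ℝ) ≤ (N:ℝ) := by exact_mod_cast hN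
  have hN0 : (0:ℝ) < (N:ℝ) := by linarith
  have hlog2 : (0.6931471803:ℝ) < Real.log 2 := Real.log_two_gt_d9
  have hlogN : Real.log 2 ≤ Real.log N := Real.log_le_log (by norm_num) hNR
  have hlogN0 : (0:ℝ) < Real.log N := by linarith
  have hNlp : (0:ℝ) < (N:ℝ) ^ l := by positivity
  -- denominator bounds
  have hDlb : ∀ k : ℕ, 1 ≤ k →
      (k:ℝ) ^ (v - 1) ≤ ((k:ℝ) + 1) ^ v - (k:ℝ) ^ v := by
    intro k hk
    have hk1 : (1:ℝ) ≤ (k:ℝ) := by exact_mod_cast hk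
    have h := bern_lower hv1 hk1
    have hp : (0:ℝ) ≤ (k:ℝ) ^ (v - 1) := Real.rpow_nonneg (by linarith) _
    nlinarith
  have hDpos : ∀ k : ℕ, 1 ≤ k → (0:ℝ) < ((k:ℝ) + 1) ^ v - (k:ℝ) ^ v := by
    intro k hk
    have hk1 : (1:ℝ) ≤ (k:ℝ) := by exact_mod_cast hk
    have := hDlb k hk
    have : (0:ℝ) < (k:ℝ) ^ (v - 1) := Real.rpow_pos_of_pos (by linarith) _
    linarith [hDlb k hk]
  have hterm_nonneg : ∀ k ∈ Finset.Icc 1 (N - 1),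
      (0:ℝ) ≤ (((N : ℝ) ^ v - (k : ℝ) ^ v) /
        (((k:ℝ) + 1) ^ v - (k : ℝ) ^ v)) ^ (l - 1) := by
    intro k hk
    rw [Finset.mem_Icc] at hk
    have hkN : (k:ℝ) ≤ (N:ℝ) := by
      have : k ≤ N := le_trans hk.2 (Nat.sub_le _ _)
      exact_mod_cast this
    have hnum : (0:ℝ) ≤ (N:ℝ) ^ v - (k:ℝ) ^ v := by
      have := Real.rpow_le_rpow (Nat.cast_nonneg k) hkN (by linarith : (0:ℝ) ≤ v)
      linarith
    exact pow_nonneg (div_nonneg hnum (hDpos k hk.1).le) _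
  constructor
  · -- LOWER BOUND
    set M := N / 2 with hM
    have hM1 : 1 ≤ M := Nat.one_le_div_iff (by norm_num) |>.mpr hN
    have hMle : M ≤ N - 1 := by omega
    have h2M : 2 * M ≤ N := by omega
    have h2M' : N - 1 ≤ 2 * M := by omega
    have hMR : (M:ℝ) ≤ (N:ℝ) / 2 := by
      have : (2:ℝ) * (M:ℝ) ≤ (N:ℝ) := by exact_mod_cast h2M
      linarith
    have hMR2 : (N:ℝ) - 1 ≤ 2 * (M:ℝ) := by
      have : ((N - 1 : ℕ):ℝ) ≤ ((2 * M : ℕ):ℝ) := by exact_mod_cast h2M'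
      push_cast [hN1] at this
      linarith
    clear_value M
    -- per-term lower bound for k ∈ Icc 1 M
    have hterm : ∀ k ∈ Finset.Icc 1 M,
        (N:ℝ) ^ l / (8 ^ (l - 1)) * ((k:ℝ))⁻¹ ≤
        (((N : ℝ) ^ v - (k : ℝ) ^ v) /
          (((k:ℝ) + 1) ^ v - (k : ℝ) ^ v)) ^ (l - 1) := by
      intro k hk
      rw [Finset.mem_Icc] at hk
      have hk1 : (1:ℝ) ≤ (k:ℝ) := by exact_mod_cast hk.1
      have hk0 : (0:ℝ) < (k:ℝ) := by linarith
      have hkM : (k:ℝ) ≤ (M:ℝ) := by exact_mod_cast hk.2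
      -- numerator ≥ N^v / 2
      have hkv : (k:ℝ) ^ v ≤ (N:ℝ) ^ v / 2 := by
        have h1 : (k:ℝ) ^ v ≤ ((N:ℝ) / 2) ^ v :=
          Real.rpow_le_rpow hk0.le (by linarith) (by linarith)
        have h2 : ((N:ℝ) / 2) ^ v = (N:ℝ) ^ v * (1/2 : ℝ) ^ v := by
          rw [← Real.mul_rpow hN0.le (by norm_num)]
          congr 1
          ring
        have h3 : ((1:ℝ)/2) ^ v ≤ (1/2 : ℝ) ^ (1:ℝ) :=
          Real.rpow_le_rpow_of_exponent_ge (by norm_num) (by norm_num) hv1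
        rw [Real.rpow_one] at h3
        have hNv : (0:ℝ) ≤ (N:ℝ) ^ v := Real.rpow_nonneg hN0.le _
        calc (k:ℝ) ^ v ≤ (N:ℝ) ^ v * (1/2 : ℝ) ^ v := by rw [← h2]; exact h1
          _ ≤ (N:ℝ) ^ v * (1/2) := mul_le_mul_of_nonneg_left h3 hNv
          _ = (N:ℝ) ^ v / 2 := by ring
      have hnum : (N:ℝ) ^ v / 2 ≤ (N:ℝ) ^ v - (k:ℝ) ^ v := by linarith
      -- denominator ≤ 4 k^(v-1)
      have hden : ((k:ℝ) + 1) ^ v - (k:ℝ) ^ v ≤ 4 * (k:ℝ) ^ (v - 1) := by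
        have h1 := bern_upper hv1 (le_of_lt hk0)
        have h2 : ((k:ℝ) + 1) ^ (v - 1) ≤ (2 * (k:ℝ)) ^ (v - 1) :=
          Real.rpow_le_rpow (by linarith) (by linarith) (by linarith)
        have h3 : ((2:ℝ) * (k:ℝ)) ^ (v - 1) = 2 ^ (v - 1) * (k:ℝ) ^ (v - 1) :=
          Real.mul_rpow (by norm_num) hk0.le
        have h4 : (2:ℝ) ^ (v - 1) ≤ 2 ^ (1:ℝ) :=
          Real.rpow_le_rpow_of_exponent_le (by norm_num) (by linarith)
        rw [Real.rpow_one] at h4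
        have hkvm : (0:ℝ) ≤ (k:ℝ) ^ (v - 1) := Real.rpow_nonneg hk0.le _
        have hA : (0:ℝ) ≤ ((k:ℝ) + 1) ^ (v - 1) := Real.rpow_nonneg (by linarith) _
        have h5 : v * (((k:ℝ) + 1) ^ (v - 1)) ≤ 2 * (((k:ℝ) + 1) ^ (v - 1)) :=
          mul_le_mul_of_nonneg_right hv2 hA
        have h6 : 2 * (((k:ℝ) + 1) ^ (v - 1)) ≤ 2 * (2 ^ (v - 1) * (k:ℝ) ^ (v - 1)) := by
          rw [← h3]; linarith
        have h7 : 2 ^ (v - 1) * (k:ℝ) ^ (v - 1) ≤ 2 * (k:ℝ) ^ (v - 1) :=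
          mul_le_mul_of_nonneg_right h4 hkvm
        linarith
      have hD := hDpos k hk.1
      have hkvm0 : (0:ℝ) < (k:ℝ) ^ (v - 1) := Real.rpow_pos_of_pos hk0 _
      have hratio : ((N:ℝ) ^ v / 2) / (4 * (k:ℝ) ^ (v - 1)) ≤
          ((N : ℝ) ^ v - (k : ℝ) ^ v) / (((k:ℝ) + 1) ^ v - (k : ℝ) ^ v) := by
        apply div_le_div₀ (by linarith [Real.rpow_nonneg hN0.le v, hkv]) hnum hD hden
      have hbase0 : (0:ℝ) ≤ ((N:ℝ) ^ v / 2) / (4 * (k:ℝ) ^ (v - 1)) := by positivity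
      have := pow_le_pow_left₀ hbase0 hratio (l - 1)
      refine le_trans (le_of_eq ?_) this
      have hrw : ((N:ℝ) ^ v / 2) / (4 * (k:ℝ) ^ (v - 1)) =
          (N:ℝ) ^ v / (8 * (k:ℝ) ^ (v - 1)) := by ring
      rw [hrw, div_pow, mul_pow, pow_v _ hN0.le, pow_vm1 _ hk0.le]
      rw [div_mul_eq_div_div]
      rw [div_eq_mul_inv ((N:ℝ)^l / 8^(l-1))]
    -- sum over Icc 1 M of 1/k ≥ (1/2) log N
    have hharm : Real.log ((M:ℝ) + 1) ≤ ∑ k ∈ Finset.Icc 1 M, ((k:ℝ))⁻¹ := by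
      have h := log_add_one_le_harmonic M
      have he : ((harmonic M : ℚ) : ℝ) = ∑ k ∈ Finset.Icc 1 M, ((k:ℝ))⁻¹ := by
        rw [harmonic_eq_sum_Icc]
        push_cast
        rfl
      rw [he] at h
      convert h using 2
      push_cast
      ring
    have hlogM : (1/2 : ℝ) * Real.log N ≤ Real.log ((M:ℝ) + 1) := by
      have hM0 : (0:ℝ) ≤ (M:ℝ) := Nat.cast_nonneg M
      have hsq : (N:ℝ) ≤ ((M:ℝ) + 1) ^ (2:ℕ) := by nlinarith [sq_nonneg ((M:ℝ))]
      have := Real.log_le_log hN0 hsq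
      rw [Real.log_pow] at this
      push_cast at this
      linarith
    calc 1 / (2 * 8 ^ (l - 1)) * (N : ℝ) ^ l * Real.log N
        = (N:ℝ) ^ l / 8 ^ (l - 1) * ((1/2 : ℝ) * Real.log N) := by ring
      _ ≤ (N:ℝ) ^ l / 8 ^ (l - 1) * (∑ k ∈ Finset.Icc 1 M, ((k:ℝ))⁻¹) := by
          apply mul_le_mul_of_nonneg_left _ (by positivity)
          linarith
      _ = ∑ k ∈ Finset.Icc 1 M, (N:ℝ) ^ l / 8 ^ (l - 1) * ((k:ℝ))⁻¹ := by
          rw [Finset.mul_sum]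
      _ ≤ ∑ k ∈ Finset.Icc 1 M,
            (((N : ℝ) ^ v - (k : ℝ) ^ v) /
              (((k:ℝ) + 1) ^ v - (k : ℝ) ^ v)) ^ (l - 1) :=
          Finset.sum_le_sum hterm
      _ ≤ ∑ k ∈ Finset.Icc 1 (N - 1),
            (((N : ℝ) ^ v - (k : ℝ) ^ v) /
              (((k:ℝ) + 1) ^ v - (k : ℝ) ^ v)) ^ (l - 1) :=
          Finset.sum_le_sum_of_subset_of_nonneg
            (Finset.Icc_subset_Icc_right hMle)
            (fun k hk _ => hterm_nonneg k hk)
  · -- UPPER BOUND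
    have hterm : ∀ k ∈ Finset.Icc 1 (N - 1),
        (((N : ℝ) ^ v - (k : ℝ) ^ v) /
          (((k:ℝ) + 1) ^ v - (k : ℝ) ^ v)) ^ (l - 1) ≤
        (N:ℝ) ^ l * ((k:ℝ))⁻¹ := by
      intro k hk
      rw [Finset.mem_Icc] at hk
      have hk1 : (1:ℝ) ≤ (k:ℝ) := by exact_mod_cast hk.1
      have hk0 : (0:ℝ) < (k:ℝ) := by linarith
      have hkN : (k:ℝ) ≤ (N:ℝ) := by
        have : k ≤ N := le_trans hk.2 (Nat.sub_le _ _)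
        exact_mod_cast this
      have hnum : (0:ℝ) ≤ (N:ℝ) ^ v - (k:ℝ) ^ v := by
        have := Real.rpow_le_rpow hk0.le hkN (by linarith : (0:ℝ) ≤ v)
        linarith
      have hkvm0 : (0:ℝ) < (k:ℝ) ^ (v - 1) := Real.rpow_pos_of_pos hk0 _
      have hkv0 : (0:ℝ) ≤ (k:ℝ) ^ v := Real.rpow_nonneg hk0.le _
      have hratio : ((N : ℝ) ^ v - (k : ℝ) ^ v) / (((k:ℝ) + 1) ^ v - (k : ℝ) ^ v) ≤
          (N:ℝ) ^ v / (k:ℝ) ^ (v - 1) := by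
        apply div_le_div₀ (Real.rpow_nonneg hN0.le v) (by linarith) hkvm0 (hDlb k hk.1)
      have hD := hDpos k hk.1
      have hbase0 : (0:ℝ) ≤ ((N : ℝ) ^ v - (k : ℝ) ^ v) /
          (((k:ℝ) + 1) ^ v - (k : ℝ) ^ v) := div_nonneg hnum hD.le
      have := pow_le_pow_left₀ hbase0 hratio (l - 1)
      refine le_trans this (le_of_eq ?_)
      rw [div_pow, pow_v _ hN0.le, pow_vm1 _ hk0.le, div_eq_mul_inv]
    have hharm : ∑ k ∈ Finset.Icc 1 (N - 1), ((k:ℝ))⁻¹ ≤ 1 + Real.log (N - 1 : ℕ) := by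
      have h := harmonic_le_one_add_log (N - 1)
      have he : ((harmonic (N-1) : ℚ) : ℝ) = ∑ k ∈ Finset.Icc 1 (N-1), ((k:ℝ))⁻¹ := by
        rw [harmonic_eq_sum_Icc]
        push_cast
        rfl
      rw [he] at h
      exact h
    have hlogNm : Real.log ((N - 1 : ℕ):ℝ) ≤ Real.log N := by
      have h0 : (0:ℝ) < ((N - 1 : ℕ):ℝ) := by
        have : 1 ≤ N - 1 := by omega
        exact_mod_cast Nat.lt_of_lt_of_le Nat.zero_lt_one this
      exact Real.log_le_log h0 (by exact_mod_cast Nat.sub_le N 1)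
    have hsum : ∑ k ∈ Finset.Icc 1 (N - 1), ((k:ℝ))⁻¹ ≤ 3 * Real.log N := by
      have h1 : (1:ℝ) ≤ 2 * Real.log N := by linarith
      calc ∑ k ∈ Finset.Icc 1 (N - 1), ((k:ℝ))⁻¹ ≤ 1 + Real.log (N - 1 : ℕ) := hharm
        _ ≤ 1 + Real.log N := by linarith
        _ ≤ 3 * Real.log N := by linarith
    calc ∑ k ∈ Finset.Icc 1 (N - 1),
          (((N : ℝ) ^ v - (k : ℝ) ^ v) /
            (((k:ℝ) + 1) ^ v - (k : ℝ) ^ v)) ^ (l - 1)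
        ≤ ∑ k ∈ Finset.Icc 1 (N - 1), (N:ℝ) ^ l * ((k:ℝ))⁻¹ :=
          Finset.sum_le_sum hterm
      _ = (N:ℝ) ^ l * ∑ k ∈ Finset.Icc 1 (N - 1), ((k:ℝ))⁻¹ := by
          rw [Finset.mul_sum]
      _ ≤ (N:ℝ) ^ l * (3 * Real.log N) :=
          mul_le_mul_of_nonneg_left hsum hNlp.le
      _ = 3 * (N : ℝ) ^ l * Real.log N := by ring
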